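/- Let Θ be a continuous action of Ξ = ℝ^{2n} on a locally compact Hausdorff space Σ and let σ ∈ Σ be of the first kind, i.e. every g ∈ C₀(Ξ) can be written as g = f ∘ Θ_σ for some f ∈ C₀(Σ). Let E := E_σ be the quasi-orbit generated by σ. Then for every f ∈ C₀(E), the function f ∘ Θ_σ belongs to C₀(Ξ) if and only if f vanishes identically on the set E^n := E \ E^g of non-generic points of E. -/

import Mathlib

open Filter Topology

/-- A `C₀` complex function on a Euclidean space that equals `1` at the origin. -/
noncomputable def auxBump (m : ℕ) :
    ZeroAtInftyContinuousMap (EuclideanSpace ℝ (Fin m)) ℂ where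
  toFun X := ((1 + ‖X‖ ^ 2)⁻¹ : ℝ)
  continuous_toFun := by
    apply Complex.continuous_ofReal.comp
    apply Continuous.inv₀
    · continuity
    · intro X
      positivity
  zero_at_infty' := by
    have h1 : Tendsto (fun X : EuclideanSpace ℝ (Fin m) => (1 + ‖X‖ ^ 2 : ℝ))
        (cocompact _) atTop := by
      apply tendsto_atTop_add_const_left
      exact (tendsto_pow_atTop two_ne_zero).comp tendsto_norm_cocompact_atTop
    have h2 : Tendsto (fun X : EuclideanSpace ℝ (Fin m) => ((1 + ‖X‖ ^ 2)⁻¹ : ℝ))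
        (cocompact _) (𝓝 0) := tendsto_inv_atTop_zero.comp h1
    have h3 := (Complex.continuous_ofReal.tendsto 0).comp h2
    simpa only [Function.comp_def, Complex.ofReal_zero] using h3

@[simp] theorem auxBump_zero (m : ℕ) : auxBump m 0 = 1 := by
  simp [auxBump]

/-- The orbit map, viewed as a map into the quasi-orbit. -/
def orbitMap {Ξ : Type*} {Ω : Type*} [TopologicalSpace Ω] (Θ : Ξ → Ω → Ω) (σ₀ : Ω)
    (X : Ξ) : ↥(closure (Set.range fun X => Θ X σ₀)) :=
  ⟨Θ X σ₀, subset_closure (Set.mem_range_self X)⟩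

/-- General form of the statement, for an abstract additive group `Ξ`. -/
theorem aux_first_kind_comp_zero_at_infty_iff {Ξ : Type*} [TopologicalSpace Ξ]
    [AddCommGroup Ξ] [IsTopologicalAddGroup Ξ]
    {Ω : Type*} [TopologicalSpace Ω] [T2Space Ω]
    (g₀ : ZeroAtInftyContinuousMap Ξ ℂ) (hg₀ : g₀ 0 = 1)
    (Θ : Ξ → Ω → Ω)
    (hcont : Continuous fun p : Ω × Ξ => Θ p.2 p.1)
    (hzero : ∀ σ, Θ 0 σ = σ)
    (hadd : ∀ X Y σ, Θ X (Θ Y σ) = Θ (X + Y) σ)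
    (σ₀ : Ω)
    (hfirst : ∀ g : ZeroAtInftyContinuousMap Ξ ℂ,
      ∃ h : ZeroAtInftyContinuousMap Ω ℂ, ∀ X, g X = h (Θ X σ₀))
    (f : ZeroAtInftyContinuousMap (↥(closure (Set.range fun X => Θ X σ₀))) ℂ) :
    Tendsto (fun X : Ξ =>
        f ⟨Θ X σ₀, subset_closure (Set.mem_range_self X)⟩)
      (cocompact Ξ) (𝓝 0) ↔
    ∀ σ (hσ : σ ∈ closure (Set.range fun X => Θ X σ₀)),
      closure (Set.range fun X => Θ X σ) ≠ closure (Set.range fun X => Θ X σ₀) →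
      f ⟨σ, hσ⟩ = 0 := by
  have hφ'cont : Continuous (fun X : Ξ => Θ X σ₀) :=
    hcont.comp ((continuous_const.prodMk continuous_id : Continuous fun X : Ξ => (σ₀, X)))
  have hΘcont : ∀ Y : Ξ, Continuous (Θ Y) := fun Y =>
    hcont.comp ((continuous_id.prodMk continuous_const : Continuous fun ω : Ω => (ω, Y)))
  have hφcont : Continuous (orbitMap Θ σ₀) := hφ'cont.subtype_mk _
  have horbit : ∀ X : Ξ, Set.range (fun Y => Θ Y (Θ X σ₀)) =
      Set.range (fun X => Θ X σ₀) := by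
    intro X
    ext ω
    constructor
    · rintro ⟨Y, rfl⟩
      exact ⟨Y + X, by simp only [hadd]⟩
    · rintro ⟨Z, rfl⟩
      exact ⟨Z - X, by simp only [hadd, sub_add_cancel]⟩
  constructor
  · -- forward direction
    intro htend σ hσ hng
    have hσnot : σ ∉ Set.range (fun X : Ξ => Θ X σ₀) := by
      rintro ⟨X, rfl⟩
      exact hng (by rw [horbit X])
    have hne : (map (fun X : Ξ => Θ X σ₀) (cocompact Ξ) ⊓ 𝓝 σ).NeBot := by
      rw [((hasBasis_cocompact.map _).inf_basis_neBot_iff (nhds_basis_opens σ))]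
      intro K hK U hU
      have hKc : IsCompact ((fun X : Ξ => Θ X σ₀) '' K) := hK.image hφ'cont
      have hσK : σ ∉ (fun X : Ξ => Θ X σ₀) '' K := fun hmem =>
        hσnot (Set.image_subset_range _ _ hmem)
      have hV : (U ∩ ((fun X : Ξ => Θ X σ₀) '' K)ᶜ) ∈ 𝓝 σ :=
        Filter.inter_mem (hU.2.mem_nhds hU.1) (hKc.isClosed.isOpen_compl.mem_nhds hσK)
      rcases mem_closure_iff_nhds.mp hσ _ hV with ⟨ω, ⟨hωU, hωK⟩, X, rfl⟩
      exact ⟨Θ X σ₀, ⟨X, fun hXK => hωK ⟨X, hXK, rfl⟩, rfl⟩, hωU⟩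
    have hne' : (cocompact Ξ ⊓ comap (orbitMap Θ σ₀) (𝓝 (⟨σ, hσ⟩ :
        ↥(closure (Set.range fun X => Θ X σ₀))))).NeBot := by
      rw [← Filter.map_neBot_iff (orbitMap Θ σ₀), Filter.push_pull]
      have hval : map Subtype.val (map (orbitMap Θ σ₀) (cocompact Ξ) ⊓ 𝓝 (⟨σ, hσ⟩ :
          ↥(closure (Set.range fun X => Θ X σ₀)))) =
          map (fun X : Ξ => Θ X σ₀) (cocompact Ξ) ⊓ 𝓝 σ := by
        rw [nhds_subtype_eq_comap, Filter.push_pull, Filter.map_map]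
        rfl
      rw [← Filter.map_neBot_iff (Subtype.val :
        ↥(closure (Set.range fun X => Θ X σ₀)) → Ω), hval]
      exact hne
    have h1 : Tendsto (fun X => f (orbitMap Θ σ₀ X))
        (cocompact Ξ ⊓ comap (orbitMap Θ σ₀) (𝓝 ⟨σ, hσ⟩)) (𝓝 0) :=
      htend.mono_left inf_le_left
    have h2 : Tendsto (fun X => f (orbitMap Θ σ₀ X))
        (cocompact Ξ ⊓ comap (orbitMap Θ σ₀) (𝓝 ⟨σ, hσ⟩)) (𝓝 (f ⟨σ, hσ⟩)) := by
      have hφt : Tendsto (orbitMap Θ σ₀)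
          (cocompact Ξ ⊓ comap (orbitMap Θ σ₀) (𝓝 ⟨σ, hσ⟩))
          (𝓝 (⟨σ, hσ⟩ : ↥(closure (Set.range fun X => Θ X σ₀)))) :=
        tendsto_comap.mono_left inf_le_right
      exact (f.continuous.tendsto _).comp hφt
    exact tendsto_nhds_unique h2 h1
  · -- backward direction
    intro hvan
    rw [Metric.tendsto_nhds]
    by_contra hcon
    push_neg at hcon
    obtain ⟨ε, hε, hfreq⟩ := hcon
    replace hfreq : ∃ᶠ X in cocompact Ξ, ¬ dist (f (orbitMap Θ σ₀ X)) 0 < ε :=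
      hfreq.mono fun X hX => not_lt.mpr hX
    have hCcomp : IsCompact {e : ↥(closure (Set.range fun X => Θ X σ₀)) |
        ¬ dist (f e) 0 < ε} := by
      have hz := f.zero_at_infty'
      rw [Metric.tendsto_nhds] at hz
      rcases (hasBasis_cocompact.eventually_iff.mp (hz ε hε)) with ⟨K, hK, hKsub⟩
      have hCK : {e : ↥(closure (Set.range fun X => Θ X σ₀)) |
          ¬ dist (f e) 0 < ε} ⊆ K := fun e he => by
        by_contra hek
        exact he (hKsub hek)
      have hCclosed : IsClosed {e : ↥(closure (Set.range fun X => Θ X σ₀)) |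
          ¬ dist (f e) 0 < ε} := by
        have hCeq : {e : ↥(closure (Set.range fun X => Θ X σ₀)) | ¬ dist (f e) 0 < ε}
            = (fun e => dist (f e) 0) ⁻¹' Set.Ici ε := by
          ext e
          simp [not_lt]
        rw [hCeq]
        exact IsClosed.preimage (by continuity) isClosed_Ici
      exact hK.of_isClosed_subset hCclosed hCK
    have hLne : (cocompact Ξ ⊓ 𝓟 {X : Ξ |
        ¬ dist (f (orbitMap Θ σ₀ X)) 0 < ε}).NeBot :=
      frequently_iff_neBot.mp hfreq
    have hmapL : map (orbitMap Θ σ₀) (cocompact Ξ ⊓ 𝓟 {X : Ξ |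
        ¬ dist (f (orbitMap Θ σ₀ X)) 0 < ε}) ≤
        𝓟 {e : ↥(closure (Set.range fun X => Θ X σ₀)) | ¬ dist (f e) 0 < ε} := by
      refine le_trans (map_mono inf_le_right) ?_
      rw [Filter.map_principal]
      exact principal_mono.mpr (by rintro e ⟨X, hX, rfl⟩; exact hX)
    obtain ⟨τ, hτC, hτcl⟩ := hCcomp hmapL
    have hne' : (cocompact Ξ ⊓ 𝓟 {X : Ξ | ¬ dist (f (orbitMap Θ σ₀ X)) 0 < ε} ⊓
        comap (orbitMap Θ σ₀) (𝓝 τ)).NeBot := by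
      rw [← Filter.map_neBot_iff (orbitMap Θ σ₀), Filter.push_pull, inf_comm]
      exact hτcl
    set N := cocompact Ξ ⊓ 𝓟 {X : Ξ | ¬ dist (f (orbitMap Θ σ₀ X)) 0 < ε} ⊓
        comap (orbitMap Θ σ₀) (𝓝 τ) with hN
    have hτng : closure (Set.range fun Y => Θ Y (τ : Ω)) ≠
        closure (Set.range fun X => Θ X σ₀) := by
      intro heq
      obtain ⟨h, hh⟩ := hfirst g₀
      have hvanτ : ∀ Y : Ξ, h (Θ Y (τ : Ω)) = 0 := by
        intro Y
        have ht1 : Tendsto (fun X : Ξ => h (Θ Y (Θ X σ₀))) N (𝓝 (h (Θ Y (τ : Ω)))) := by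
          have hφτ : Tendsto (fun X : Ξ => ((orbitMap Θ σ₀ X : Ω))) N (𝓝 (τ : Ω)) := by
            have hφN : Tendsto (orbitMap Θ σ₀) N (𝓝 τ) :=
              tendsto_comap.mono_left inf_le_right
            exact (continuous_subtype_val.tendsto _).comp hφN
          exact (h.continuous.tendsto _).comp (((hΘcont Y).tendsto _).comp hφτ)
        have ht2 : Tendsto (fun X : Ξ => h (Θ Y (Θ X σ₀))) N (𝓝 0) := by
          have heqfun : ∀ X : Ξ, h (Θ Y (Θ X σ₀)) = g₀ (Y + X) := by
            intro X
            rw [hadd]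
            exact (hh (Y + X)).symm
          simp only [heqfun]
          have htrans : Tendsto (fun X : Ξ => Y + X) (cocompact Ξ) (cocompact Ξ) :=
            (Homeomorph.addLeft Y).map_cocompact.le
          exact g₀.zero_at_infty'.comp
            (htrans.mono_left (le_trans inf_le_left inf_le_left))
        exact tendsto_nhds_unique ht1 ht2
      have hσ₀mem : σ₀ ∈ closure (Set.range fun Y => Θ Y (τ : Ω)) := by
        rw [heq]
        exact subset_closure ⟨0, hzero σ₀⟩
      have hhσ₀ : h σ₀ = 0 := by
        have hclosed : IsClosed {ω : Ω | h ω = 0} :=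
          isClosed_eq h.continuous continuous_const
        have hsub : closure (Set.range fun Y => Θ Y (τ : Ω)) ⊆ {ω : Ω | h ω = 0} :=
          closure_minimal (by rintro ω ⟨Y, rfl⟩; exact hvanτ Y) hclosed
        exact hsub hσ₀mem
      have h1 : h σ₀ = 1 := by
        have h0 := hh 0
        rw [hzero] at h0
        rw [← h0, hg₀]
      rw [hhσ₀] at h1
      exact one_ne_zero h1.symm
    have hfτ : f τ = 0 := by
      have := hvan (τ : Ω) τ.2 hτng
      simpa using this
    exact hτC (by simpa [hfτ] using hε)

/-- Let `σ₀` be of the first kind and `E = E_{σ₀}` the quasi-orbit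
it generates. For every `f ∈ C₀(E)`, the function `f ∘ Θ_{σ₀}` belongs to
`C₀(Ξ)` (i.e. vanishes at infinity) if and only if `f` vanishes identically on
the set `Eⁿ = E \ E^g` of non-generic points of `E`. -/
theorem first_kind_comp_zero_at_infty_iff (n : ℕ) {Ω : Type*} [TopologicalSpace Ω]
    [T2Space Ω] [LocallyCompactSpace Ω]
    (Θ : EuclideanSpace ℝ (Fin (2 * n)) → Ω → Ω)
    (hcont : Continuous fun p : Ω × EuclideanSpace ℝ (Fin (2 * n)) => Θ p.2 p.1)
    (hzero : ∀ σ, Θ 0 σ = σ)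
    (hadd : ∀ X Y σ, Θ X (Θ Y σ) = Θ (X + Y) σ)
    (σ₀ : Ω)
    -- `σ₀` is of the first kind
    (hfirst : ∀ g : ZeroAtInftyContinuousMap (EuclideanSpace ℝ (Fin (2 * n))) ℂ,
      ∃ h : ZeroAtInftyContinuousMap Ω ℂ, ∀ X, g X = h (Θ X σ₀))
    (f : ZeroAtInftyContinuousMap (↥(closure (Set.range fun X => Θ X σ₀))) ℂ) :
    Tendsto (fun X : EuclideanSpace ℝ (Fin (2 * n)) =>
        f ⟨Θ X σ₀, subset_closure (Set.mem_range_self X)⟩)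
      (cocompact (EuclideanSpace ℝ (Fin (2 * n)))) (𝓝 0) ↔
    ∀ σ (hσ : σ ∈ closure (Set.range fun X => Θ X σ₀)),
      closure (Set.range fun X => Θ X σ) ≠ closure (Set.range fun X => Θ X σ₀) →
      f ⟨σ, hσ⟩ = 0 :=
  aux_first_kind_comp_zero_at_infty_iff (auxBump (2 * n)) (auxBump_zero (2 * n))
    Θ hcont hzero hadd σ₀ hfirst f
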